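/- Let G be a graph with B ⊆ V(G) and a vertex cover S ⊇ B with |S| = δ(G−B) + p where 0 < p < δ(G−B)/8. Then for any X ⊆ V(G)\S with |X| ≥ δ(G−B) − 3p, at most 2p vertices of S have fewer than 2p neighbors in X. -/
import Mathlib


/-- `deltaB G B` is the minimum degree of the induced subgraph `G - B`. -/
noncomputable def deltaB {V : Type*} [Fintype V] [DecidableEq V] (G : SimpleGraph V)
    [DecidableRel G.Adj] (B : Finset V) : ℕ :=
  sInf { d : ℕ | ∃ v, v ∉ B ∧ ((G.neighborFinset v).filter (· ∉ B)).card = d }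

/-- Let `G` be a graph with `B ⊆ V(G)` and a vertex cover `S ⊇ B` with
`|S| = δ(G−B) + p` where `0 < p < δ(G−B)/8`. Then for any `X ⊆ V(G)\S` with
`|X| ≥ δ(G−B) − 3p`, at most `2p` vertices of `S` have fewer than `2p` neighbors in `X`. -/
theorem stmt_8 {V : Type*} [Fintype V] [DecidableEq V] (G : SimpleGraph V)
    [DecidableRel G.Adj] (B S : Finset V) (p : ℕ) (hBS : B ⊆ S)
    (hvc : ∀ u v, G.Adj u v → u ∈ S ∨ v ∈ S)
    (hScard : S.card = deltaB G B + p) (hp : 0 < p) (hp8 : 8 * p < deltaB G B)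
    (X : Finset V) (hX : X ⊆ Sᶜ) (hXcard : deltaB G B - 3 * p ≤ X.card) :
    (S.filter fun v => ((G.neighborFinset v).filter (· ∈ X)).card < 2 * p).card ≤ 2 * p := by
  classical
  set δ := deltaB G B with hδ
  set T := S.filter fun v => ((G.neighborFinset v).filter (· ∈ X)).card < 2 * p with hT
  by_contra hcon
  push_neg at hcon
  -- every vertex of X is outside S
  have hXS : ∀ x ∈ X, x ∉ S := by
    intro x hx
    simpa using hX hx
  -- all neighbors of a vertex of X are in S
  have hAll : ∀ x ∈ X, ∀ y, G.Adj x y → y ∈ S := by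
    intro x hx y hxy
    rcases hvc x y hxy with h | h
    · exact absurd h (hXS x hx)
    · exact h
  have hdeg : ∀ x ∈ X, δ ≤ (S.filter (fun v => G.Adj x v)).card := by
    intro x hx
    have hxB : x ∉ B := fun h => (hXS x hx) (hBS h)
    have h1 : δ ≤ ((G.neighborFinset x).filter (· ∉ B)).card :=
      Nat.sInf_le ⟨x, hxB, rfl⟩
    refine h1.trans (Finset.card_le_card ?_)
    intro y hy
    simp only [Finset.mem_filter, SimpleGraph.mem_neighborFinset] at hy ⊢
    exact ⟨hAll x hx y hy.1, hy.1⟩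
  -- each x ∈ X has at most p non-neighbors in S (hence in T)
  have hnon : ∀ x ∈ X, (T.filter (fun v => ¬ G.Adj x v)).card ≤ p := by
    intro x hx
    have h1 : (T.filter (fun v => ¬ G.Adj x v)).card
        ≤ (S.filter (fun v => ¬ G.Adj x v)).card := by
      apply Finset.card_le_card
      intro y hy
      simp only [Finset.mem_filter, hT] at hy ⊢
      exact ⟨hy.1.1, hy.2⟩
    have h2 : (S.filter (fun v => G.Adj x v)).card
        + (S.filter (fun v => ¬ G.Adj x v)).card = S.card :=
      Finset.card_filter_add_card_filter_not _
    have h3 := hdeg x hx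
    omega
  -- double counting
  have hswap : ∀ v, ((G.neighborFinset v).filter (· ∈ X))
      = X.filter (fun x => G.Adj x v) := by
    intro v
    ext x
    simp only [Finset.mem_filter, SimpleGraph.mem_neighborFinset]
    constructor
    · rintro ⟨h1, h2⟩; exact ⟨h2, h1.symm⟩
    · rintro ⟨h1, h2⟩; exact ⟨h2.symm, h1⟩
  have hsum : ∑ x ∈ X, (T.filter (fun v => G.Adj x v)).card
      = ∑ v ∈ T, ((G.neighborFinset v).filter (· ∈ X)).card := by
    simp_rw [hswap, Finset.card_filter]
    exact Finset.sum_comm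
  have hlow : X.card * (T.card - p) ≤ ∑ x ∈ X, (T.filter (fun v => G.Adj x v)).card := by
    calc X.card * (T.card - p) = ∑ _x ∈ X, (T.card - p) := by
          rw [Finset.sum_const, smul_eq_mul]
      _ ≤ _ := Finset.sum_le_sum (fun x hx => by
          have h1 := hnon x hx
          have h2 : (T.filter (fun v => G.Adj x v)).card
              + (T.filter (fun v => ¬ G.Adj x v)).card = T.card :=
            Finset.card_filter_add_card_filter_not _
          omega)
  have hup : ∑ v ∈ T, ((G.neighborFinset v).filter (· ∈ X)).card ≤ T.card * (2 * p - 1) := by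
    calc ∑ v ∈ T, ((G.neighborFinset v).filter (· ∈ X)).card
        ≤ ∑ _v ∈ T, (2 * p - 1) := Finset.sum_le_sum (fun v hv => by
          simp only [hT, Finset.mem_filter] at hv
          omega)
      _ = T.card * (2 * p - 1) := by rw [Finset.sum_const, smul_eq_mul]
  have hkey : X.card * (T.card - p) ≤ T.card * (2 * p - 1) := by
    calc X.card * (T.card - p) ≤ _ := hlow
      _ = _ := hsum
      _ ≤ _ := hup
  -- arithmetic contradiction
  set t := T.card with ht
  set m := X.card with hm
  have hm5 : 5 * p + 1 ≤ m := by omega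
  have hq : t = (t - p) + p := by omega
  set q := t - p with hqdef
  have hq1 : p + 1 ≤ q := by omega
  have hr : 2 * p - 1 + 1 = 2 * p := by omega
  set r := 2 * p - 1 with hrdef
  have : m * q ≤ t * r := hkey
  nlinarith [mul_le_mul hm5 (le_refl q) (Nat.zero_le q) (Nat.zero_le m)]
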